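/- With kₙ = ⌊n^{1/(p-1)}⌋ for 2 < p < 3, one has lim_{n→∞} n·kₙ^{1-p} = 1 and lim_{n→∞} (n p /2) ( (p-1) (∑_{k=1}^{kₙ} k^{p-2}) / kₙ^p − 1/kₙ ) = 0. -/

import Mathlib

open Filter Topology

lemma cantor_mvt_rpow (q : ℝ) (hq : 1 < q) (x : ℝ) :
    ∃ c ∈ Set.Ioo x (x+1), (x+1) ^ q - x ^ q = q * c ^ (q-1) := by
  have h : ∀ y : ℝ, HasDerivAt (fun t : ℝ => t ^ q) (q * y ^ (q-1)) y := fun y =>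
    Real.hasDerivAt_rpow_const (Or.inr hq.le)
  obtain ⟨c, hc, hc2⟩ := exists_hasDerivAt_eq_slope (fun t : ℝ => t ^ q)
    (fun t => q * t ^ (q-1)) (show x < x+1 by linarith)
    (fun y _ => (h y).continuousAt.continuousWithinAt) (fun y _ => h y)
  refine ⟨c, hc, ?_⟩
  rw [hc2]; simp [slope]

lemma cantor_rpow_succ_sub_le (q : ℝ) (hq : 1 < q) (x : ℝ) (hx : 0 ≤ x) :
    (x+1) ^ q - x ^ q ≤ q * (x+1) ^ (q-1) := by
  obtain ⟨c, hc, hc2⟩ := cantor_mvt_rpow q hq x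
  rw [hc2]
  have : c ^ (q-1) ≤ (x+1) ^ (q-1) :=
    Real.rpow_le_rpow (le_trans hx hc.1.le) hc.2.le (by linarith)
  nlinarith

lemma cantor_le_rpow_succ_sub (q : ℝ) (hq : 1 < q) (x : ℝ) (hx : 0 ≤ x) :
    q * x ^ (q-1) ≤ (x+1) ^ q - x ^ q := by
  obtain ⟨c, hc, hc2⟩ := cantor_mvt_rpow q hq x
  rw [hc2]
  have : x ^ (q-1) ≤ c ^ (q-1) := Real.rpow_le_rpow hx hc.1.le (by linarith)
  nlinarith

lemma cantor_icc_to_range (g : ℝ → ℝ) (K : ℕ) :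
    ∑ k ∈ Finset.Icc 1 K, g (k:ℝ) = ∑ i ∈ Finset.range K, g ((i:ℝ)+1) := by
  rw [← Finset.Ico_add_one_right_eq_Icc, Finset.sum_Ico_eq_sum_range]
  norm_num
  refine Finset.sum_congr rfl fun i _ => ?_
  push_cast
  rw [add_comm]

lemma cantor_sum_lb (q : ℝ) (hq : 1 < q) (K : ℕ) :
    (K:ℝ) ^ q ≤ q * ∑ k ∈ Finset.Icc 1 K, (k:ℝ) ^ (q-1) := by
  rw [cantor_icc_to_range (fun x => x ^ (q-1)), Finset.mul_sum]
  have tel := Finset.sum_range_sub (fun i : ℕ => ((i:ℝ)) ^ q) K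
  push_cast at tel
  rw [Real.zero_rpow (by positivity : q ≠ 0), sub_zero] at tel
  rw [← tel]
  refine Finset.sum_le_sum fun i _ => ?_
  exact cantor_rpow_succ_sub_le q hq (i:ℝ) (Nat.cast_nonneg i)

lemma cantor_sum_ub (q : ℝ) (hq : 1 < q) (K : ℕ) :
    q * ∑ k ∈ Finset.Icc 1 K, (k:ℝ) ^ (q-1) ≤ ((K:ℝ)+1) ^ q - 1 := by
  rw [cantor_icc_to_range (fun x => x ^ (q-1)), Finset.mul_sum]
  have tel := Finset.sum_range_sub (fun i : ℕ => ((i:ℝ)+1) ^ q) K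
  push_cast at tel
  simp only [zero_add, Real.one_rpow] at tel
  calc ∑ i ∈ Finset.range K, q * ((i:ℝ)+1) ^ (q-1)
      ≤ ∑ i ∈ Finset.range K, (((i:ℝ)+1+1) ^ q - ((i:ℝ)+1) ^ q) :=
        Finset.sum_le_sum fun i _ => cantor_le_rpow_succ_sub q hq ((i:ℝ)+1) (by positivity)
    _ = ((K:ℝ)+1) ^ q - 1 := tel

/-- Key computation for the Cantor-type path: with `kₙ = ⌊n^{1/(p-1)}⌋` and `2 < p < 3`,
`n·kₙ^{1-p} → 1` and `(np/2)((p-1)(∑_{k=1}^{kₙ} k^{p-2})/kₙ^p − 1/kₙ) → 0`. -/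
theorem cantor_remainder_limits (p : ℝ) (hp2 : 2 < p) (hp3 : p < 3) :
    Tendsto (fun n : ℕ =>
        (n : ℝ) * ((⌊(n : ℝ) ^ (1 / (p - 1))⌋₊ : ℝ) ^ (1 - p))) atTop (𝓝 1) ∧
    Tendsto (fun n : ℕ =>
        ((n : ℝ) * p / 2) *
          ((p - 1) * (∑ k ∈ Finset.Icc 1 ⌊(n : ℝ) ^ (1 / (p - 1))⌋₊, (k : ℝ) ^ (p - 2)) /
              (⌊(n : ℝ) ^ (1 / (p - 1))⌋₊ : ℝ) ^ p -
            1 / (⌊(n : ℝ) ^ (1 / (p - 1))⌋₊ : ℝ))) atTop (𝓝 0) := by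
  have hp0 : (0:ℝ) < p - 1 := by linarith
  have hp1 : (1:ℝ) < p - 1 := by linarith
  set K : ℕ → ℕ := fun n => ⌊(n : ℝ) ^ (1 / (p - 1))⌋₊ with hKdef
  have hK : Tendsto K atTop atTop := by
    apply tendsto_nat_floor_atTop.comp
    exact (tendsto_rpow_atTop (by positivity)).comp tendsto_natCast_atTop_atTop
  have hKR : Tendsto (fun n => (K n : ℝ)) atTop atTop :=
    tendsto_natCast_atTop_atTop.comp hK
  have hK1 : ∀ n : ℕ, 1 ≤ n → 1 ≤ K n := by
    intro n hn
    apply Nat.le_floor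
    rw [Nat.cast_one]
    apply Real.one_le_rpow (by exact_mod_cast hn) (by positivity)
  have hlow : ∀ n : ℕ, ((K n : ℝ)) ^ (p-1) ≤ n := by
    intro n
    have h0 : (0:ℝ) ≤ (n:ℝ) ^ (1/(p-1)) := Real.rpow_nonneg (Nat.cast_nonneg n) _
    have hf : (K n : ℝ) ≤ (n:ℝ) ^ (1/(p-1)) := Nat.floor_le h0
    calc ((K n : ℝ)) ^ (p-1) ≤ ((n:ℝ) ^ (1/(p-1))) ^ (p-1) :=
          Real.rpow_le_rpow (Nat.cast_nonneg _) hf hp0.le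
      _ = n := by
          rw [← Real.rpow_mul (Nat.cast_nonneg n), one_div_mul_cancel hp0.ne', Real.rpow_one]
  have hup : ∀ n : ℕ, (n:ℝ) < ((K n : ℝ) + 1) ^ (p-1) := by
    intro n
    have h0 : (0:ℝ) ≤ (n:ℝ) ^ (1/(p-1)) := Real.rpow_nonneg (Nat.cast_nonneg n) _
    have hf : (n:ℝ) ^ (1/(p-1)) < (K n : ℝ) + 1 := Nat.lt_floor_add_one _
    calc (n:ℝ) = ((n:ℝ) ^ (1/(p-1))) ^ (p-1) := by
          rw [← Real.rpow_mul (Nat.cast_nonneg n), one_div_mul_cancel hp0.ne', Real.rpow_one]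
      _ < ((K n : ℝ) + 1) ^ (p-1) := Real.rpow_lt_rpow h0 hf hp0
  have part1 : Tendsto (fun n : ℕ => (n : ℝ) * ((K n : ℝ) ^ (1 - p))) atTop (𝓝 1) := by
    have hone : Tendsto (fun n : ℕ => 1 + 1/(K n : ℝ)) atTop (𝓝 1) := by
      simpa [one_div] using tendsto_const_nhds.add hKR.inv_tendsto_atTop
    apply tendsto_of_tendsto_of_tendsto_of_le_of_le'
      (g := fun _ : ℕ => (1:ℝ)) (h := fun n : ℕ => (1 + 1/(K n : ℝ)) ^ (p-1))
    · exact tendsto_const_nhds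
    · have hc : ContinuousAt (fun x : ℝ => x ^ (p-1)) 1 :=
        Real.continuousAt_rpow_const 1 (p-1) (Or.inl one_ne_zero)
      have := hc.tendsto.comp hone
      simpa [Real.one_rpow, Function.comp_def] using this
    · filter_upwards [eventually_ge_atTop 1] with n hn
      have hKpos : (0:ℝ) < K n := by exact_mod_cast hK1 n hn
      rw [show 1 - p = -(p-1) by ring, Real.rpow_neg hKpos.le, ← div_eq_mul_inv,
        le_div_iff₀ (Real.rpow_pos_of_pos hKpos _), one_mul]
      exact hlow n
    · filter_upwards [eventually_ge_atTop 1] with n hn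
      have hKpos : (0:ℝ) < K n := by exact_mod_cast hK1 n hn
      rw [show (1:ℝ) + 1/(K n : ℝ) = ((K n : ℝ) + 1)/(K n : ℝ) by field_simp,
        Real.div_rpow (by positivity) hKpos.le,
        show 1 - p = -(p-1) by ring, Real.rpow_neg hKpos.le, ← div_eq_mul_inv]
      exact div_le_div_of_nonneg_right (hup n).le (by positivity) |>.trans_eq rfl
  refine ⟨part1, ?_⟩
  have hq12 : p - 1 - 1 = p - 2 := by ring
  have hT : Tendsto (fun n : ℕ => ((K n : ℝ) + 1) ^ (p-2) / (K n : ℝ)) atTop (𝓝 0) := by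
    have h3 : Tendsto (fun n : ℕ => ((K n : ℝ) + 1) ^ (p-3)) atTop (𝓝 0) := by
      have := (tendsto_rpow_neg_atTop (show (0:ℝ) < 3 - p by linarith)).comp
        (tendsto_atTop_add_const_right atTop (1:ℝ) hKR)
      simpa [Function.comp_def, show -(3-p) = p - 3 by ring] using this
    have hone : Tendsto (fun n : ℕ => 1 + 1/(K n : ℝ)) atTop (𝓝 1) := by
      simpa [one_div] using tendsto_const_nhds.add hKR.inv_tendsto_atTop
    have := hone.mul h3
    rw [mul_zero] at this
    apply this.congr'
    filter_upwards [hKR.eventually_ge_atTop 1] with n hn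
    have hKpos : (0:ℝ) < K n := by linarith
    have e1 : ((K n : ℝ) + 1) ^ (p-2) = ((K n : ℝ) + 1) ^ (p-3) * ((K n : ℝ) + 1) := by
      rw [← Real.rpow_add_one (by positivity) (p-3)]
      congr 1
      ring
    rw [e1]
    field_simp
  have hV : Tendsto (fun n : ℕ => (p*(p-1)/2) * ((n:ℝ) * (K n : ℝ) ^ (1-p)) *
      (((K n : ℝ) + 1) ^ (p-2) / (K n : ℝ))) atTop (𝓝 0) := by
    have := (Tendsto.mul (tendsto_const_nhds (x := p*(p-1)/2)) part1).mul hT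
    simpa using this
  apply tendsto_of_tendsto_of_tendsto_of_le_of_le' tendsto_const_nhds hV
  · filter_upwards [eventually_ge_atTop 1] with n hn
    have hKpos : (0:ℝ) < K n := by exact_mod_cast hK1 n hn
    have hApos : (0:ℝ) < (K n : ℝ) ^ p := Real.rpow_pos_of_pos hKpos p
    have hBe : (K n : ℝ) ^ (p-1) = (K n : ℝ) ^ p / (K n : ℝ) := by
      rw [Real.rpow_sub hKpos, Real.rpow_one]
    have hBA : 1 / (K n : ℝ) = (K n : ℝ) ^ (p-1) / (K n : ℝ) ^ p := by
      rw [hBe]; field_simp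
    have hsum := cantor_sum_lb (p-1) hp1 (K n)
    rw [hq12] at hsum
    apply mul_nonneg (by positivity)
    rw [sub_nonneg, hBA]
    exact div_le_div_of_nonneg_right hsum hApos.le
  · filter_upwards [eventually_ge_atTop 1] with n hn
    have hKpos : (0:ℝ) < K n := by exact_mod_cast hK1 n hn
    have hApos : (0:ℝ) < (K n : ℝ) ^ p := Real.rpow_pos_of_pos hKpos p
    have hBe : (K n : ℝ) ^ (p-1) = (K n : ℝ) ^ p / (K n : ℝ) := by
      rw [Real.rpow_sub hKpos, Real.rpow_one]
    have hBA : 1 / (K n : ℝ) = (K n : ℝ) ^ (p-1) / (K n : ℝ) ^ p := by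
      rw [hBe]; field_simp
    have hsum := cantor_sum_ub (p-1) hp1 (K n)
    rw [hq12] at hsum
    have hmvt := cantor_rpow_succ_sub_le (p-1) hp1 (K n : ℝ) hKpos.le
    rw [hq12] at hmvt
    have hnum : (p-1) * (∑ k ∈ Finset.Icc 1 (K n), (k : ℝ) ^ (p - 2)) - (K n : ℝ) ^ (p-1)
        ≤ (p-1) * ((K n : ℝ) + 1) ^ (p-2) := by linarith
    have hD : (p - 1) * (∑ k ∈ Finset.Icc 1 (K n), (k : ℝ) ^ (p - 2)) / (K n : ℝ) ^ p
        - 1 / (K n : ℝ) ≤ (p-1) * ((K n : ℝ) + 1) ^ (p-2) / (K n : ℝ) ^ p := by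
      rw [hBA, div_sub_div_same]
      exact div_le_div_of_nonneg_right hnum hApos.le
    have hstep := mul_le_mul_of_nonneg_left hD (show (0:ℝ) ≤ (n:ℝ)*p/2 by positivity)
    refine hstep.trans_eq ?_
    have hCA : (K n : ℝ) ^ (1-p) * (K n : ℝ) ^ p = (K n : ℝ) := by
      rw [← Real.rpow_add hKpos]
      norm_num
    field_simp
    linear_combination (-1) * hCA
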